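/- Let $A$ be a unital complex Banach algebra, $p$ a polynomial with distinct roots $\lambda_1,\dots,\lambda_n$, and $C$ a connected component of $E_p(A) = \{a : p(a)=0\}$. Then $C$ is a relatively open subset of $E_p(A)$, and any two elements $a_0, a_1 \in C$ are similar: there exist $m \geq 1$ and $c_1,\dots,c_m \in A$ with $a_1 = e^{-c_m}\cdots e^{-c_1} a_0 e^{c_1}\cdots e^{c_m}$. -/

import Mathlib

open Polynomial

section Aux
open NormedSpace
set_option linter.unusedSectionVars false

noncomputable def pp {n : ℕ} (l : Fin n → ℂ) : ℂ[X] := ∏ i : Fin n, (X - C (l i))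
noncomputable def qq {n : ℕ} (l : Fin n → ℂ) (i : Fin n) : ℂ[X] :=
  ∏ j ∈ Finset.univ.erase i, (X - C (l j))

theorem basis_eq {n : ℕ} (l : Fin n → ℂ) (i : Fin n) :
    Lagrange.basis Finset.univ l i
      = C (∏ j ∈ Finset.univ.erase i, (l i - l j)⁻¹) * qq l i := by
  unfold Lagrange.basis Lagrange.basisDivisor qq
  rw [map_prod, ← Finset.prod_mul_distrib]

theorem pp_dvd_X_sub_mul_basis {n : ℕ} (l : Fin n → ℂ) (i : Fin n) :
    pp l ∣ (X - C (l i)) * Lagrange.basis Finset.univ l i := by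
  rw [basis_eq]
  have h : pp l = (X - C (l i)) * qq l i :=
    (Finset.mul_prod_erase _ _ (Finset.mem_univ i)).symm
  exact ⟨C (∏ j ∈ Finset.univ.erase i, (l i - l j)⁻¹), by rw [h]; ring⟩

theorem pp_dvd_basis_mul_basis {n : ℕ} (l : Fin n → ℂ) {i j : Fin n} (hij : i ≠ j) :
    pp l ∣ Lagrange.basis Finset.univ l i * Lagrange.basis Finset.univ l j := by
  rw [basis_eq, basis_eq]
  have hj : j ∈ Finset.univ.erase i := Finset.mem_erase.2 ⟨hij.symm, Finset.mem_univ j⟩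
  have h1 : qq l i = (X - C (l j)) * ∏ k ∈ (Finset.univ.erase i).erase j, (X - C (l k)) :=
    (Finset.mul_prod_erase _ _ hj).symm
  have h2 : pp l = (X - C (l j)) * qq l j :=
    (Finset.mul_prod_erase _ _ (Finset.mem_univ j)).symm
  exact ⟨C (∏ j ∈ Finset.univ.erase i, (l i - l j)⁻¹) *
      C (∏ k ∈ Finset.univ.erase j, (l j - l k)⁻¹) *
      ∏ k ∈ (Finset.univ.erase i).erase j, (X - C (l k)), by rw [h1, h2]; ring⟩

variable {A : Type*} [NormedRing A] [NormedAlgebra ℂ A] [CompleteSpace A] [NormOneClass A]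

/-- Conjugation by an invertible element as an algebra hom. -/
noncomputable def conjHom (w v : A) (hwv : w * v = 1) (hvw : v * w = 1) : A →ₐ[ℂ] A where
  toFun x := w * x * v
  map_one' := by simpa using hwv
  map_mul' x y := by
    show w * (x * y) * v = w * x * v * (w * y * v)
    have : w * x * v * (w * y * v) = w * x * (v * w) * (y * v) := by noncomm_ring
    rw [this, hvw, mul_one]; noncomm_ring
  map_zero' := by simp
  map_add' x y := by noncomm_ring
  commutes' r := by
    show w * (algebraMap ℂ A r) * v = algebraMap ℂ A r
    rw [Algebra.algebraMap_eq_smul_one, mul_smul_comm, mul_one, smul_mul_assoc, hwv]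

theorem conj_aeval (w v : A) (hwv : w * v = 1) (hvw : v * w = 1) (x : A) (p : ℂ[X]) :
    aeval (w * x * v) p = w * aeval x p * v :=
  (aeval_algHom_apply (conjHom w v hwv hvw) x p).symm ▸ rfl

theorem exp_neg_mul_exp (c : A) : exp (-c) * exp c = 1 := by
  let +nondep : NormedAlgebra ℚ A := .restrictScalars ℚ ℂ A
  rw [← exp_add_of_commute (Commute.refl c).neg_left, neg_add_cancel, exp_zero]

theorem exp_mul_exp_neg (c : A) : exp c * exp (-c) = 1 := by
  let +nondep : NormedAlgebra ℚ A := .restrictScalars ℚ ℂ A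
  rw [← exp_add_of_commute (Commute.refl c).neg_right, add_neg_cancel, exp_zero]

theorem list_wv (L : List A) :
    (L.map (fun x => exp (-x))).reverse.prod * (L.map (fun x => exp x)).prod = 1 := by
  induction L with
  | nil => simp
  | cons x L ih =>
      simp only [List.map_cons, List.reverse_cons, List.prod_append, List.prod_cons,
        List.prod_nil, mul_one]
      calc (L.map (fun x => exp (-x))).reverse.prod * exp (-x) *
            (exp x * (L.map (fun x => exp x)).prod)
          = (L.map (fun x => exp (-x))).reverse.prod * (exp (-x) * exp x) *
            (L.map (fun x => exp x)).prod := by noncomm_ring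
        _ = 1 := by rw [exp_neg_mul_exp, mul_one, ih]

theorem list_vw (L : List A) :
    (L.map (fun x => exp x)).prod * (L.map (fun x => exp (-x))).reverse.prod = 1 := by
  induction L with
  | nil => simp
  | cons x L ih =>
      simp only [List.map_cons, List.reverse_cons, List.prod_append, List.prod_cons,
        List.prod_nil, mul_one]
      calc exp x * (L.map (fun x => exp x)).prod *
            ((L.map (fun x => exp (-x))).reverse.prod * exp (-x))
          = exp x * ((L.map (fun x => exp x)).prod *
              (L.map (fun x => exp (-x))).reverse.prod) * exp (-x) := by noncomm_ring
        _ = 1 := by rw [ih, mul_one, exp_mul_exp_neg]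

theorem aeval_rel_left {n : ℕ} (l : Fin n → ℂ) {a : A} (ha : aeval a (pp l) = 0) (i : Fin n) :
    a * aeval a (Lagrange.basis Finset.univ l i)
      = l i • aeval a (Lagrange.basis Finset.univ l i) := by
  obtain ⟨q, hq⟩ := pp_dvd_X_sub_mul_basis l i
  have h0 : aeval a ((X - C (l i)) * Lagrange.basis Finset.univ l i) = 0 := by
    rw [hq, map_mul, ha, zero_mul]
  rw [map_mul, map_sub, aeval_X, aeval_C, sub_mul, sub_eq_zero] at h0
  rw [h0, Algebra.smul_def]

theorem aeval_rel_right {n : ℕ} (l : Fin n → ℂ) {b : A} (hb : aeval b (pp l) = 0) (i : Fin n) :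
    aeval b (Lagrange.basis Finset.univ l i) * b
      = l i • aeval b (Lagrange.basis Finset.univ l i) := by
  obtain ⟨q, hq⟩ := pp_dvd_X_sub_mul_basis l i
  have h0 : aeval b (Lagrange.basis Finset.univ l i * (X - C (l i))) = 0 := by
    rw [mul_comm, hq, map_mul, hb, zero_mul]
  rw [map_mul, map_sub, aeval_X, aeval_C, mul_sub, sub_eq_zero] at h0
  rw [h0, ← Algebra.commutes, Algebra.smul_def]

theorem aeval_orth {n : ℕ} (l : Fin n → ℂ) {a : A} (ha : aeval a (pp l) = 0) {i j : Fin n}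
    (hij : i ≠ j) :
    aeval a (Lagrange.basis Finset.univ l i) * aeval a (Lagrange.basis Finset.univ l j) = 0 := by
  obtain ⟨q, hq⟩ := pp_dvd_basis_mul_basis l hij
  rw [← map_mul, hq, map_mul, ha, zero_mul]

theorem sum_sq_eq_one {n : ℕ} (hn : 2 ≤ n) (l : Fin n → ℂ) (hl : Function.Injective l)
    {a : A} (ha : aeval a (pp l) = 0) :
    ∑ i : Fin n, aeval a (Lagrange.basis Finset.univ l i)
        * aeval a (Lagrange.basis Finset.univ l i) = 1 := by
  have hne : (Finset.univ : Finset (Fin n)).Nonempty := by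
    have : 0 < n := by omega
    exact ⟨⟨0, this⟩, Finset.mem_univ _⟩
  have hsum : ∑ j ∈ Finset.univ, Lagrange.basis Finset.univ l j = 1 :=
    Lagrange.sum_basis (Function.Injective.injOn hl) hne
  have h1 : (1 : A) = aeval a ((∑ j ∈ Finset.univ, Lagrange.basis Finset.univ l j)
      * (∑ j ∈ Finset.univ, Lagrange.basis Finset.univ l j)) := by
    rw [hsum, one_mul, map_one]
  rw [map_mul, map_sum, Finset.sum_mul_sum] at h1
  rw [h1]
  apply Finset.sum_congr rfl
  intro i _
  symm
  apply Finset.sum_eq_single i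
  · intro j _ hji
    exact aeval_orth l ha (fun h => hji (h.symm ▸ rfl))
  · intro h; exact absurd (Finset.mem_univ i) h

theorem exp_range_nhds : {v : A | ∃ c : A, exp c = v} ∈ nhds (1 : A) := by
  have h1 : HasStrictFDerivAt (exp)
      ((ContinuousLinearEquiv.refl ℂ A : A ≃L[ℂ] A) : A →L[ℂ] A) (0 : A) := by
    simpa [ContinuousLinearMap.one_def] using
      (hasStrictFDerivAt_exp_zero : HasStrictFDerivAt (exp) (1 : A →L[ℂ] A) 0)
  have hmap := h1.map_nhds_eq_of_equiv
  rw [exp_zero] at hmap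
  rw [← hmap]
  exact Filter.mem_map.2 (Filter.univ_mem' (fun c => ⟨c, rfl⟩))

theorem key_local {n : ℕ} (hn : 2 ≤ n) (l : Fin n → ℂ) (hl : Function.Injective l)
    {a : A} (ha : aeval a (pp l) = 0) :
    ∃ ε > 0, ∀ b : A, aeval b (pp l) = 0 → ‖b - a‖ < ε →
      ∃ c : A, b = exp (-c) * a * exp c := by
  let +nondep : NormedAlgebra ℚ A := .restrictScalars ℚ ℂ A
  obtain ⟨δ, hδ, hball⟩ := Metric.mem_nhds_iff.1 (exp_range_nhds (A := A))
  set F : A → A := fun b => ∑ i : Fin n,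
    aeval a (Lagrange.basis Finset.univ l i) * aeval b (Lagrange.basis Finset.univ l i) with hF
  have hFc : Continuous F := by
    apply continuous_finset_sum
    intro i _
    exact continuous_const.mul (Polynomial.continuous_aeval _)
  have hFa : F a = 1 := sum_sq_eq_one hn l hl ha
  obtain ⟨ε, hε, hcont⟩ := Metric.continuousAt_iff.1 (hFc.continuousAt (x := a)) δ hδ
  refine ⟨ε, hε, fun b hb hba => ?_⟩
  have hFb : F b ∈ Metric.ball (1 : A) δ := by
    have := hcont (by rwa [dist_eq_norm] : dist b a < ε)
    rw [hFa] at this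
    exact Metric.mem_ball.2 this
  obtain ⟨c, hc⟩ : ∃ c : A, exp c = F b := hball hFb
  have hcomm : a * F b = F b * b := by
    rw [hF]
    simp only [Finset.mul_sum, Finset.sum_mul]
    apply Finset.sum_congr rfl
    intro i _
    rw [← mul_assoc, aeval_rel_left l ha i, smul_mul_assoc, ← mul_smul_comm,
      ← aeval_rel_right l hb i, mul_assoc]
  have hac : a * exp c = exp c * b := by rw [hc]; exact hcomm
  refine ⟨c, ?_⟩
  have h2 : exp (-c) * (a * exp c) = exp (-c) * (exp c * b) := by rw [hac]
  rw [← mul_assoc, ← mul_assoc] at h2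
  rw [h2, ← exp_add_of_commute (Commute.refl c).neg_left, neg_add_cancel, exp_zero, one_mul]

theorem cont_list_prod (M : List A) (g : ℝ → A → A)
    (hg : ∀ x ∈ M, Continuous fun t => g t x) :
    Continuous fun t => (M.map (g t)).prod := by
  induction M with
  | nil => simpa using continuous_const
  | cons x M ih =>
      simp only [List.map_cons, List.prod_cons]
      exact (hg x (by simp)).mul (ih fun y hy => hg y (by simp [hy]))

theorem list_map_one_prod {B : Type*} [Monoid B] (L : List B) :
    (L.map fun _ => (1 : B)).prod = 1 := by
  induction L with
  | nil => simp
  | cons x L ih => simpa using ih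

theorem rel_open_of {S Ep : Set A} (hSE : S ⊆ Ep)
    (h : ∀ b ∈ S, ∃ ε > 0, ∀ b' ∈ Ep, ‖b' - b‖ < ε → b' ∈ S) :
    ∃ U : Set A, IsOpen U ∧ S = U ∩ Ep := by
  choose ε hε hball using h
  refine ⟨⋃ (b : A) (hb : b ∈ S), Metric.ball b (ε b hb),
    isOpen_iUnion fun b => isOpen_iUnion fun hb => Metric.isOpen_ball, ?_⟩
  ext x
  constructor
  · intro hx
    exact ⟨Set.mem_iUnion.2 ⟨x, Set.mem_iUnion.2 ⟨hx, Metric.mem_ball_self (hε x hx)⟩⟩, hSE hx⟩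
  · rintro ⟨hxU, hxE⟩
    obtain ⟨b, hb⟩ := Set.mem_iUnion.1 hxU
    obtain ⟨hbS, hxb⟩ := Set.mem_iUnion.1 hb
    exact hball b hbS x hxE (by rwa [Metric.mem_ball, dist_eq_norm] at hxb)

end Aux

/-- Each connected component of `E_p(A)` is relatively open, and any two
of its elements are similar via a finite product of exponentials:
`a₁ = e^{-c_m} ⋯ e^{-c_1} a₀ e^{c_1} ⋯ e^{c_m}`. -/
theorem stmt9 {A : Type*} [NormedRing A] [NormedAlgebra ℂ A] [CompleteSpace A] [NormOneClass A]
    (n : ℕ) (hn : 2 ≤ n) (l : Fin n → ℂ) (hl : Function.Injective l)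
    (Ep : Set A) (hEp : Ep = {a : A | aeval a (∏ i : Fin n, (X - C (l i))) = 0})
    (a₀ : A) (ha₀ : a₀ ∈ Ep) :
    (∃ U : Set A, IsOpen U ∧ connectedComponentIn Ep a₀ = U ∩ Ep) ∧
      ∀ a₁ ∈ connectedComponentIn Ep a₀,
        ∃ (m : ℕ), 1 ≤ m ∧ ∃ c : Fin m → A,
          a₁ = (List.ofFn fun i => NormedSpace.exp (-(c i))).reverse.prod * a₀ *
                 (List.ofFn fun i => NormedSpace.exp (c i)).prod := by
  let +nondep : NormedAlgebra ℚ A := .restrictScalars ℚ ℂ A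
  open NormedSpace in
  have hmem : ∀ x : A, x ∈ Ep ↔ aeval x (pp l) = 0 := fun x => by rw [hEp]; exact Iff.rfl
  set S : Set A := {b | ∃ L : List A, L ≠ [] ∧
    b = (L.map fun x => NormedSpace.exp (-x)).reverse.prod * a₀ *
      (L.map fun x => NormedSpace.exp x).prod} with hSdef
  have ha₀' : aeval a₀ (pp l) = 0 := (hmem a₀).1 ha₀
  have hS_sub : S ⊆ Ep := by
    rintro b ⟨L, hL, rfl⟩
    rw [hmem, conj_aeval _ _ (list_wv L) (list_vw L), ha₀', mul_zero, zero_mul]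
  have ha₀S : a₀ ∈ S := ⟨[0], by simp, by simp⟩
  have hstep : ∀ b ∈ S, ∀ c : A, (NormedSpace.exp (-c) * b * NormedSpace.exp c) ∈ S := by
    rintro b ⟨L, hL, rfl⟩ c
    refine ⟨L ++ [c], by simp, ?_⟩
    simp only [List.map_append, List.map_cons, List.map_nil, List.reverse_append,
      List.reverse_cons, List.reverse_nil, List.nil_append, List.prod_cons, List.prod_append,
      List.prod_nil, mul_one, one_mul]
    simp [mul_assoc]
  have hopenS : ∀ b ∈ S, ∃ ε > 0, ∀ b' ∈ Ep, ‖b' - b‖ < ε → b' ∈ S := by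
    intro b hb
    obtain ⟨ε, hε, h⟩ := key_local hn l hl ((hmem b).1 (hS_sub hb))
    refine ⟨ε, hε, fun b' hb' hlt => ?_⟩
    obtain ⟨c, hc⟩ := h b' ((hmem b').1 hb') hlt
    rw [hc]
    exact hstep b hb c
  have hopenC : ∀ b ∈ Ep \ S, ∃ ε > 0, ∀ b' ∈ Ep, ‖b' - b‖ < ε → b' ∈ Ep \ S := by
    rintro b ⟨hbE, hbS⟩
    obtain ⟨ε, hε, h⟩ := key_local hn l hl ((hmem b).1 hbE)
    refine ⟨ε, hε, fun b' hb' hlt => ⟨hb', fun hb'S => hbS ?_⟩⟩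
    obtain ⟨c, hc⟩ := h b' ((hmem b').1 hb') hlt
    have hbb : b = NormedSpace.exp (-(-c)) * b' * NormedSpace.exp (-c) := by
      rw [neg_neg, hc, ← mul_assoc, ← mul_assoc, exp_mul_exp_neg, one_mul, mul_assoc,
        exp_mul_exp_neg, mul_one]
    rw [hbb]
    exact hstep b' hb'S (-c)
  obtain ⟨U, hUopen, hUS⟩ := rel_open_of hS_sub hopenS
  obtain ⟨U', hU'open, hU'S⟩ := rel_open_of Set.diff_subset hopenC
  have hTS : connectedComponentIn Ep a₀ ⊆ S := by
    rw [connectedComponentIn_eq_image ha₀]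
    have hopen' : IsOpen (Subtype.val ⁻¹' S : Set Ep) := by
      have heq : (Subtype.val ⁻¹' S : Set Ep) = Subtype.val ⁻¹' U := by
        ext x
        simp only [Set.mem_preimage]
        constructor
        · intro h; exact ((hUS ▸ h : (x : A) ∈ U ∩ Ep)).1
        · intro h; exact hUS ▸ Set.mem_inter h x.2
      rw [heq]
      exact hUopen.preimage continuous_subtype_val
    have hclosed' : IsClosed (Subtype.val ⁻¹' S : Set Ep) := by
      rw [← isOpen_compl_iff]
      have heq : ((Subtype.val ⁻¹' S : Set Ep)ᶜ) = Subtype.val ⁻¹' U' := by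
        ext x
        simp only [Set.mem_compl_iff, Set.mem_preimage]
        constructor
        · intro h
          exact ((hU'S ▸ (⟨x.2, h⟩ : (x : A) ∈ Ep \ S)) : (x : A) ∈ U' ∩ Ep).1
        · intro h hS'
          exact ((hU'S ▸ Set.mem_inter h x.2 : (x : A) ∈ Ep \ S)).2 hS'
      rw [heq]
      exact hU'open.preimage continuous_subtype_val
    have hsub := IsClopen.connectedComponent_subset ⟨hclosed', hopen'⟩
      (show (⟨a₀, ha₀⟩ : Ep) ∈ Subtype.val ⁻¹' S from ha₀S)
    rintro x ⟨y, hy, rfl⟩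
    exact hsub hy
  have hST : S ⊆ connectedComponentIn Ep a₀ := by
    rintro b ⟨L, hL, rfl⟩
    set γ : ℝ → A := fun t =>
      (((L.map fun x => (t : ℂ) • x).map fun x => NormedSpace.exp (-x)).reverse.prod) * a₀ *
        ((L.map fun x => (t : ℂ) • x).map fun x => NormedSpace.exp x).prod with hγ
    have hγc : Continuous γ := by
      apply Continuous.mul
      apply Continuous.mul
      · have heq : (fun t : ℝ =>
            (((L.map fun x => (t : ℂ) • x).map fun x => NormedSpace.exp (-x)).reverse.prod))
            = fun t : ℝ =>
              (L.reverse.map (fun x => NormedSpace.exp (-((t : ℂ) • x)))).prod := by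
          funext t
          rw [List.map_map, ← List.map_reverse]
          rfl
        rw [heq]
        exact cont_list_prod _ _ (fun x _ =>
          exp_continuous.comp ((Complex.continuous_ofReal.smul continuous_const).neg))
      · exact continuous_const
      · rw [show (fun t : ℝ =>
            ((L.map fun x => (t : ℂ) • x).map fun x => NormedSpace.exp x).prod)
            = fun t : ℝ => (L.map (fun x => NormedSpace.exp ((t : ℂ) • x))).prod from by
          funext t; rw [List.map_map]; rfl]
        exact cont_list_prod _ _ (fun x _ =>
          exp_continuous.comp (Complex.continuous_ofReal.smul continuous_const))
    have hmemS : ∀ t : ℝ, γ t ∈ S := fun t =>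
      ⟨L.map fun x => (t : ℂ) • x, by simpa using hL, rfl⟩
    have h0 : γ 0 = a₀ := by
      rw [hγ]
      simp only [Complex.ofReal_zero, zero_smul, List.map_map]
      have h1 : ((fun x => NormedSpace.exp (-x)) ∘ fun _ : A => (0 : A)) = fun _ : A => (1 : A) := by
        funext x; simp
      have h2 : ((fun x => NormedSpace.exp x) ∘ fun _ : A => (0 : A)) = fun _ : A => (1 : A) := by
        funext x; simp
      rw [h1, h2, list_map_one_prod, ← List.map_reverse, list_map_one_prod, one_mul, mul_one]
    have h1 : γ 1 = (L.map fun x => NormedSpace.exp (-x)).reverse.prod * a₀ *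
        (L.map fun x => NormedSpace.exp x).prod := by
      rw [hγ]
      simp only [Complex.ofReal_one, one_smul, List.map_id']
    have hpre : IsPreconnected (γ '' Set.univ) := isPreconnected_univ.image γ hγc.continuousOn
    have hsub : γ '' Set.univ ⊆ Ep := by
      rintro _ ⟨t, -, rfl⟩
      exact hS_sub (hmemS t)
    have ha₀mem : a₀ ∈ γ '' Set.univ := ⟨0, trivial, h0⟩
    exact hpre.subset_connectedComponentIn ha₀mem hsub ⟨1, trivial, h1⟩
  have hTeq : connectedComponentIn Ep a₀ = S := Set.Subset.antisymm hTS hST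
  constructor
  · exact ⟨U, hUopen, by rw [hTeq, hUS]⟩
  · intro a₁ ha₁
    obtain ⟨L, hL, hb⟩ := hTS ha₁
    refine ⟨L.length, List.length_pos_iff.2 hL, L.get, ?_⟩
    rw [hb]
    rw [show (fun i => NormedSpace.exp (-(L.get i))) = (fun x => NormedSpace.exp (-x)) ∘ L.get
      from rfl, ← List.map_ofFn, List.ofFn_get]
    rw [show (fun i => NormedSpace.exp (L.get i)) = (fun x => NormedSpace.exp x) ∘ L.get
      from rfl, ← List.map_ofFn, List.ofFn_get]
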